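/- Let R be a commutative unital ring, let r, s, n be natural numbers, and let a_1, ..., a_s ∈ R. If M is an R-module with M ≅ R^r ⊕ ⊕_{i=1}^s R/Ra_i, then the n-th tensor power of M decomposes as T^n M ≅ R^{r^n} ⊕ ⊕_{k=1}^n ⊕_{1 ≤ i_1, ..., i_k ≤ s} ( R/⟨a_{i_1}, ..., a_{i_k}⟩ )^{C(n,k)·r^{n−k}}, where the inner direct sum is over all ordered k-tuples (i_1, ..., i_k) ∈ {1,...,s}^k, ⟨a_{i_1}, ..., a_{i_k}⟩ denotes the ideal generated by a_{i_1}, ..., a_{i_k}, and C(n,k) is the binomial coefficient. -/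

import Mathlib

open TensorProduct PiTensorProduct

namespace TPaux

variable {R : Type} [CommRing R]

/-- `R/I ⊗ R/J ≃ R/(I ⊔ J)`. -/
noncomputable def quotTensorQuot (I J : Ideal R) :
    ((R ⧸ I) ⊗[R] (R ⧸ J)) ≃ₗ[R] R ⧸ (I ⊔ J) :=
  (TensorProduct.quotTensorEquivQuotSMul (R ⧸ J) I).trans <|
    (Submodule.quotEquivOfEq _ _ (by
      have h2 : Submodule.map J.mkQ (J : Submodule R R) = ⊥ := by
        rw [eq_bot_iff]
        rintro x ⟨y, hy, rfl⟩
        simpa [Submodule.mem_bot] using (Submodule.Quotient.mk_eq_zero _).2 hy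
      have h1 : (⊤ : Submodule R (R ⧸ J)) = Submodule.map J.mkQ ⊤ := by
        rw [Submodule.map_top, Submodule.range_mkQ]
      rw [h1, ← Submodule.map_smul'', Ideal.smul_eq_mul, Ideal.mul_top,
        Submodule.map_sup, h2, sup_bot_eq])).trans
    (Submodule.quotientQuotientEquivQuotient (J : Submodule R R) (I ⊔ J) le_sup_right)

/-- Regrouping a dependent product along the fibers of a map. -/
def regroup {α β : Type} (c : α → β) (φ : α → Type)
    [∀ x, AddCommGroup (φ x)] [∀ x, Module R (φ x)] :
    (Π x, φ x) ≃ₗ[R] Π y, Π x : {x // c x = y}, φ x.1 where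
  toFun F := fun _ x => F x.1
  invFun G := fun x => G (c x) ⟨x, rfl⟩
  left_inv F := rfl
  right_inv G := by
    funext y x
    obtain ⟨x, rfl⟩ := x
    rfl
  map_add' _ _ := rfl
  map_smul' _ _ := rfl

/-- Dependent product over a sum type. -/
def sumPiLequiv {α β : Type} (φ : α ⊕ β → Type)
    [∀ x, AddCommGroup (φ x)] [∀ x, Module R (φ x)] :
    (Π x, φ x) ≃ₗ[R] (Π i : α, φ (.inl i)) × (Π j : β, φ (.inr j)) :=
  { Equiv.sumPiEquivProdPi φ with
    map_add' := fun _ _ => rfl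
    map_smul' := fun _ _ => rfl }

/-- Dependent currying over a product type. -/
def piProdCurry {α β : Type} (φ : α × β → Type)
    [∀ x, AddCommGroup (φ x)] [∀ x, Module R (φ x)] :
    (Π p, φ p) ≃ₗ[R] Π i : α, Π j : β, φ (i, j) where
  toFun F i j := F (i, j)
  invFun G p := G p.1 p.2
  left_inv F := rfl
  right_inv G := rfl
  map_add' _ _ := rfl
  map_smul' _ _ := rfl

/-- Swapping two product indices. -/
def piSwap {α β : Type} (φ : α → β → Type)
    [∀ i j, AddCommGroup (φ i j)] [∀ i j, Module R (φ i j)] :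
    (Π i, Π j, φ i j) ≃ₗ[R] Π j, Π i, φ i j where
  toFun F j i := F i j
  invFun G i j := G j i
  left_inv F := rfl
  right_inv G := rfl
  map_add' _ _ := rfl
  map_smul' _ _ := rfl

variable {s : ℕ} (a : Fin s → R)

/-- The generating set attached to an optional index. -/
def S0 : Option (Fin s) → Set R := fun o => o.elim ∅ (fun i => {a i})

/-- The ideal attached to a tuple of optional indices. -/
def Iof {n : ℕ} (h : Fin n → Option (Fin s)) : Ideal R :=
  Ideal.span (⋃ j, S0 a (h j))

lemma Iof_const_none {n : ℕ} : Iof a (fun _ : Fin n => none) = ⊥ := by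
  simp [Iof, S0, Ideal.span_empty]

lemma Iof_cons {n : ℕ} (o : Option (Fin s)) (h : Fin n → Option (Fin s)) :
    Iof a (Fin.cons o h) = Ideal.span (S0 a o) ⊔ Iof a h := by
  have hU : (⋃ j : Fin (n+1), S0 a ((Fin.cons o h : Fin (n+1) → Option (Fin s)) j))
      = S0 a o ∪ ⋃ j : Fin n, S0 a (h j) := by
    ext x
    simp only [Set.mem_iUnion, Set.mem_union]
    constructor
    · rintro ⟨j, hj⟩
      induction j using Fin.cases with
      | zero => exact Or.inl (by simpa using hj)
      | succ j => exact Or.inr ⟨j, by simpa using hj⟩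
    · rintro (hx | ⟨j, hj⟩)
      · exact ⟨0, by simpa using hx⟩
      · exact ⟨j.succ, by simpa using hj⟩
  rw [Iof, hU, Ideal.span_union]
  rfl

section fixedn

variable {n : ℕ}

/-- The set of positions where the tuple is `some`. -/
def Pset (h : Fin n → Option (Fin s)) : Finset (Fin n) :=
  Finset.univ.filter (fun j => (h j).isSome)

/-- First-level classifier: number of `some`s (minus one), if positive. -/
def dk (h : Fin n → Option (Fin s)) : Option (Fin n) :=
  if H : (Pset h).card = 0 then none
  else some ⟨(Pset h).card - 1, by
    have h1 : (Pset h).card ≤ n := by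
      simpa [Pset] using Finset.card_filter_le Finset.univ (fun j => (h (j : Fin n)).isSome)
    omega⟩

lemma dk_card {h : Fin n → Option (Fin s)} {k : Fin n} (hk : dk h = some k) :
    (Pset h).card = k.1 + 1 := by
  unfold dk at hk
  split at hk
  · exact absurd hk (by simp)
  · rename_i H
    have := congrArg Fin.val (Option.some.inj hk)
    simp only at this
    omega

lemma dk_none_card {h : Fin n → Option (Fin s)} (hk : dk h = none) :
    (Pset h).card = 0 := by
  unfold dk at hk
  split at hk
  · assumption
  · exact absurd hk (by simp)

lemma dk_none {h : Fin n → Option (Fin s)} (hk : dk h = none) :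
    h = fun _ => none := by
  have h0 := dk_none_card hk
  rw [Finset.card_eq_zero] at h0
  funext j
  by_contra hj
  have : j ∈ Pset h := by
    simp [Pset, Option.isSome_iff_ne_none, hj]
  rw [h0] at this
  simp at this

lemma dk_const_none : dk (fun _ : Fin n => (none : Option (Fin s))) = none := by
  simp [dk, Pset]

instance uniqueFiberNone : Unique {h : Fin n → Option (Fin s) // dk h = none} where
  default := ⟨fun _ => none, dk_const_none⟩
  uniq h := Subtype.ext (dk_none h.2)

/-- Second-level classifier: the ordered tuple of values at the `some` positions. -/
def dv (k : Fin n) (h : {h : Fin n → Option (Fin s) // dk h = some k}) :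
    Fin (k.1 + 1) → Fin s := fun m =>
  (h.1 (((Pset h.1).orderIsoOfFin (dk_card h.2) m) : Fin n)).get (by
    have hmem := ((Pset h.1).orderIsoOfFin (dk_card h.2) m).2
    simp only [Pset, Finset.mem_filter] at hmem
    exact hmem.2)

lemma orderIsoOfFin_congr {α : Type} [LinearOrder α] {A B : Finset α} (hAB : A = B)
    {m : ℕ} (hA : A.card = m) (i : Fin m) :
    ((A.orderIsoOfFin hA i) : α) = (B.orderIsoOfFin (hAB ▸ hA) i : α) := by
  subst hAB; rfl

lemma inl_getLeft' {α β : Type} (x : α ⊕ β) (h : x.isLeft) :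
    Sum.inl (x.getLeft h) = x := by
  cases x with
  | inl x => rfl
  | inr y => simp at h

lemma dv_spec (k : Fin n) (h : {h : Fin n → Option (Fin s) // dk h = some k})
    (m : Fin (k.1 + 1)) :
    h.1 (((Pset h.1).orderIsoOfFin (dk_card h.2) m) : Fin n) = some (dv k h m) := by
  unfold dv
  exact (Option.some_get _).symm

lemma Iof_eq_span {k : Fin n} (h : {h : Fin n → Option (Fin s) // dk h = some k})
    {v : Fin (k.1 + 1) → Fin s} (hv : dv k h = v) :
    Iof a h.1 = Ideal.span (Set.range fun m => a (v m)) := by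
  subst hv
  unfold Iof
  congr 1
  ext x
  simp only [Set.mem_iUnion, Set.mem_range]
  constructor
  · rintro ⟨j, hj⟩
    rcases ho : h.1 j with _ | i
    · rw [ho] at hj; simp [S0] at hj
    rw [ho] at hj
    simp only [S0, Option.elim, Set.mem_singleton_iff] at hj
    subst hj
    have hjP : j ∈ Pset h.1 := by simp [Pset, ho]
    set e := (Pset h.1).orderIsoOfFin (dk_card h.2) with he_def
    refine ⟨e.symm ⟨j, hjP⟩, ?_⟩
    have hspec := dv_spec k h (e.symm ⟨j, hjP⟩)
    have he : ((e (e.symm ⟨j, hjP⟩)) : { x // x ∈ Pset h.1 }) = ⟨j, hjP⟩ :=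
      e.apply_symm_apply _
    rw [← he_def, he] at hspec
    simp only at hspec
    rw [ho] at hspec
    have := Option.some.inj hspec
    rw [← this]
  · rintro ⟨m, rfl⟩
    refine ⟨(((Pset h.1).orderIsoOfFin (dk_card h.2) m) : Fin n), ?_⟩
    rw [dv_spec]
    simp [S0]

/-- The fiber of the value-extraction over a tuple `h` is the set of functions on the
`none` positions. -/
def cfiberEquiv {r : ℕ} (h : Fin n → Option (Fin s)) :
    {g : Fin n → Fin r ⊕ Fin s // (fun j => (g j).getRight?) = h} ≃
      ({j : Fin n // h j = none} → Fin r) where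
  toFun g p := (g.1 p.1).getLeft (by
    have hgj := congrFun g.2 p.1
    rw [p.2] at hgj
    cases hg : g.1 p.1 with
    | inl x => rfl
    | inr y => rw [hg] at hgj; simp at hgj)
  invFun f := ⟨fun j =>
      if hj : h j = none then Sum.inl (f ⟨j, hj⟩)
      else Sum.inr ((h j).get (Option.isSome_iff_ne_none.mpr hj)), by
    funext j
    by_cases hj : h j = none
    · simp [hj]
    · simp [hj]⟩
  left_inv g := by
    apply Subtype.ext
    funext j
    have hgj := congrFun g.2 j
    by_cases hj : h j = none
    · simp only [hj, dif_pos]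
      exact inl_getLeft' _ _
    · simp only [hj, dif_neg, not_false_iff]
      cases hg : g.1 j with
      | inl x => rw [hg] at hgj; simp at hgj; exact absurd hgj.symm hj
      | inr y =>
        rw [hg] at hgj
        simp only [Sum.getRight?] at hgj
        congr 1
        rw [← Option.some_inj, Option.some_get, ← hgj]
  right_inv f := by
    funext p
    obtain ⟨j, hj⟩ := p
    simp [hj]

lemma card_cfiber {r : ℕ} (h : Fin n → Option (Fin s)) :
    Fintype.card {g : Fin n → Fin r ⊕ Fin s // (fun j => (g j).getRight?) = h} =
      r ^ (n - (Pset h).card) := by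
  rw [Fintype.card_congr (cfiberEquiv h), Fintype.card_fun]
  congr 1
  · exact Fintype.card_fin r
  have h1 : Fintype.card {j : Fin n // h j = none} =
      Fintype.card {j : Fin n // ¬ (h j).isSome} :=
    Fintype.card_congr (Equiv.subtypeEquivRight (fun j => by
      simp [Option.not_isSome_iff_eq_none]))
  rw [h1, Fintype.card_subtype_compl, Fintype.card_fin]
  congr 1
  rw [Fintype.card_subtype]
  rfl

section dvfib

variable (k : Fin n) (v : Fin (k.1 + 1) → Fin s)

/-- The canonical tuple with `some`-positions `T` and ordered values `v`. -/
def hT (T : Finset (Fin n)) (hc : T.card = k.1 + 1) : Fin n → Option (Fin s) :=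
  fun j => if hj : j ∈ T then some (v ((T.orderIsoOfFin hc).symm ⟨j, hj⟩)) else none

lemma Pset_hT (T : Finset (Fin n)) (hc : T.card = k.1 + 1) : Pset (hT k v T hc) = T := by
  ext j
  by_cases hj : j ∈ T <;> simp [Pset, hT, hj]

lemma dk_hT (T : Finset (Fin n)) (hc : T.card = k.1 + 1) : dk (hT k v T hc) = some k := by
  unfold dk
  split
  · rename_i H
    rw [Pset_hT, hc] at H
    omega
  · refine Option.some_inj.mpr (Fin.ext ?_)
    show (Pset (hT k v T hc)).card - 1 = k.1
    rw [Pset_hT k v T hc, hc]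
    omega

lemma dv_hT (T : Finset (Fin n)) (hc : T.card = k.1 + 1) :
    dv k ⟨hT k v T hc, dk_hT k v T hc⟩ = v := by
  funext m
  have hspec := dv_spec k ⟨hT k v T hc, dk_hT k v T hc⟩ m
  set j : Fin n :=
    (((Pset (hT k v T hc)).orderIsoOfFin (dk_card (dk_hT k v T hc)) m) : Fin n) with hj_def
  have hjT : j ∈ T := by
    rw [← Pset_hT k v T hc]
    exact (((Pset (hT k v T hc)).orderIsoOfFin (dk_card (dk_hT k v T hc))) m).2
  have hval : hT k v T hc j = some (v ((T.orderIsoOfFin hc).symm ⟨j, hjT⟩)) := dif_pos hjT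
  have hspec2 : hT k v T hc j = some (dv k ⟨hT k v T hc, dk_hT k v T hc⟩ m) := hspec
  rw [hval] at hspec2
  have hidx : (⟨j, hjT⟩ : {x // x ∈ T}) = T.orderIsoOfFin hc m := by
    apply Subtype.ext
    show j = ((T.orderIsoOfFin hc) m : Fin n)
    rw [hj_def]
    exact orderIsoOfFin_congr (Pset_hT k v T hc) _ m
  rw [hidx, OrderIso.symm_apply_apply] at hspec2
  exact (Option.some.inj hspec2).symm

/-- The fiber of `dv` over an ordered tuple `v` is equivalent to the `(k+1)`-subsets of
`Fin n`. -/
def dvFiberEquiv :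
    {h : {h : Fin n → Option (Fin s) // dk h = some k} // dv k h = v} ≃
      {T : Finset (Fin n) // T.card = k.1 + 1} where
  toFun h := ⟨Pset h.1.1, dk_card h.1.2⟩
  invFun T := ⟨⟨hT k v T.1 T.2, dk_hT k v T.1 T.2⟩, dv_hT k v T.1 T.2⟩
  right_inv T := Subtype.ext (Pset_hT k v T.1 T.2)
  left_inv h := by
    apply Subtype.ext
    apply Subtype.ext
    funext j
    show hT k v (Pset h.1.1) (dk_card h.1.2) j = h.1.1 j
    by_cases hj : j ∈ Pset h.1.1
    · have hval : hT k v (Pset h.1.1) (dk_card h.1.2) j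
          = some (v (((Pset h.1.1).orderIsoOfFin (dk_card h.1.2)).symm ⟨j, hj⟩)) := dif_pos hj
      have hspec := dv_spec k h.1 (((Pset h.1.1).orderIsoOfFin (dk_card h.1.2)).symm ⟨j, hj⟩)
      rw [OrderIso.apply_symm_apply] at hspec
      have hspec' : h.1.1 j
          = some (dv k h.1 (((Pset h.1.1).orderIsoOfFin (dk_card h.1.2)).symm ⟨j, hj⟩)) := hspec
      rw [hval, hspec', h.2]
    · have h1 : hT k v (Pset h.1.1) (dk_card h.1.2) j = none := dif_neg hj
      have h2 : h.1.1 j = none := by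
        by_contra hne
        exact hj (by simp [Pset, Option.isSome_iff_ne_none, hne])
      rw [h1, h2]

lemma card_dvFiber :
    Fintype.card {h : {h : Fin n → Option (Fin s) // dk h = some k} // dv k h = v} =
      n.choose (k.1 + 1) := by
  rw [Fintype.card_congr (dvFiberEquiv k v), Fintype.card_finset_len, Fintype.card_fin]

end dvfib

end fixedn

section modules

variable (r : ℕ)

/-- The hypothesis equivalence, rewritten as a product over `Fin r ⊕ Fin s` of cyclic
modules. -/
noncomputable def eAequiv :
    ((Fin r → R) × Π i : Fin s, R ⧸ Ideal.span {a i}) ≃ₗ[R]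
      Π i : Fin r ⊕ Fin s, R ⧸ Ideal.span (S0 a i.getRight?) :=
  (LinearEquiv.prodCongr
    (LinearEquiv.piCongrRight fun i : Fin r =>
      (Submodule.quotEquivOfEqBot
        (Ideal.span (S0 a (Sum.inl i : Fin r ⊕ Fin s).getRight?))
        (by simp [S0, Ideal.span_empty])).symm)
    (LinearEquiv.piCongrRight fun i : Fin s =>
      Submodule.quotEquivOfEq (Ideal.span {a i})
        (Ideal.span (S0 a (Sum.inr i : Fin r ⊕ Fin s).getRight?)) rfl)).trans
  (sumPiLequiv (fun x : Fin r ⊕ Fin s => R ⧸ Ideal.span (S0 a x.getRight?))).symm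

/-- `Fin (n+1) → ι` as a product. -/
def consEquiv (n : ℕ) (ι : Type) : (Fin (n+1) → ι) ≃ ι × (Fin n → ι) where
  toFun g := (g 0, Fin.tail g)
  invFun p := Fin.cons p.1 p.2
  left_inv g := Fin.cons_self_tail g
  right_inv p := by
    obtain ⟨x, g⟩ := p
    simp [Fin.tail_cons]

lemma Iof_cons' {n : ℕ} (i : Fin r ⊕ Fin s) (g : Fin n → Fin r ⊕ Fin s) :
    Iof a (fun j => ((Fin.cons i g : Fin (n+1) → Fin r ⊕ Fin s) j).getRight?)
      = Ideal.span (S0 a i.getRight?) ⊔ Iof a (fun j => (g j).getRight?) := by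
  have h : (fun j => ((Fin.cons i g : Fin (n+1) → Fin r ⊕ Fin s) j).getRight?)
      = Fin.cons (i.getRight?) (fun j => (g j).getRight?) := by
    funext j
    refine Fin.cases ?_ ?_ j <;> simp
  rw [h, Iof_cons]

/-- The core computation: the `n`-th tensor power of `M` as a product of cyclic modules
indexed by all functions `Fin n → Fin r ⊕ Fin s`. -/
noncomputable def eB (M : Type) [AddCommGroup M] [Module R M]
    (eM : M ≃ₗ[R] Π i : Fin r ⊕ Fin s, R ⧸ Ideal.span (S0 a i.getRight?)) :
    (n : ℕ) → (⨂[R]^n M) ≃ₗ[R]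
      Π g : Fin n → Fin r ⊕ Fin s, R ⧸ Iof a (fun j => (g j).getRight?)
  | 0 =>
    (isEmptyEquiv (Fin 0)).trans <|
      (LinearEquiv.funUnique (Fin 0 → Fin r ⊕ Fin s) R R).symm.trans <|
      LinearEquiv.piCongrRight fun _ =>
        (Submodule.quotEquivOfEqBot _
          (by simp [Iof, Set.iUnion_of_empty, Ideal.span_empty])).symm
  | (n+1) =>
    (((reindex R (fun _ : Fin (n+1) => M)
        ((finSumFinEquiv.trans (finCongr (Nat.add_comm 1 n))).symm)).trans
      (tmulEquiv R M).symm).trans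
      (TensorProduct.congr (subsingletonEquiv (0 : Fin 1)) (LinearEquiv.refl R _))).trans <|
    (TensorProduct.congr (LinearEquiv.refl R M) (eB M eM n)).trans <|
    (TensorProduct.piRight R R M _).trans <|
    (LinearEquiv.piCongrRight fun g =>
      (TensorProduct.comm R M _).trans <|
      (TensorProduct.congr (LinearEquiv.refl R _) eM).trans <|
      (TensorProduct.piRight R R _ _).trans <|
      LinearEquiv.piCongrRight fun i =>
        (quotTensorQuot _ _).trans
          (Submodule.quotEquivOfEq _ _ (by
            rw [Iof_cons' a r i g]
            exact (sup_comm _ _))) ).trans <|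
    ((piSwap fun g i =>
        R ⧸ Iof a (fun j =>
          ((Fin.cons i g : Fin (n+1) → Fin r ⊕ Fin s) j).getRight?)).trans <|
     ((piProdCurry fun p : (Fin r ⊕ Fin s) × (Fin n → Fin r ⊕ Fin s) =>
        R ⧸ Iof a (fun j =>
          ((Fin.cons p.1 p.2 : Fin (n+1) → Fin r ⊕ Fin s) j).getRight?)).symm).trans <|
     (LinearEquiv.piCongrLeft' R
        (fun g : Fin (n+1) → Fin r ⊕ Fin s => R ⧸ Iof a (fun j => (g j).getRight?))
        (consEquiv n (Fin r ⊕ Fin s))).symm)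

/-- The full decomposition. -/
noncomputable def finalEquiv (n : ℕ) (M : Type) [AddCommGroup M] [Module R M]
    (e0 : M ≃ₗ[R] (Fin r → R) × Π i : Fin s, R ⧸ Ideal.span {a i}) :
    (⨂[R]^n M) ≃ₗ[R]
      (Fin (r ^ n) → R) ×
      Π (k : Fin n) (v : Fin (k.val + 1) → Fin s),
        Fin (Nat.choose n (k.val + 1) * r ^ (n - (k.val + 1))) →
          R ⧸ Ideal.span (Set.range fun j => a (v j)) := by
  refine eB a r M (e0.trans (eAequiv a r)) n ≪≫ₗ ?_
  refine (regroup (fun (g : Fin n → Fin r ⊕ Fin s) => fun j => (g j).getRight?)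
      (fun g => R ⧸ Iof a (fun j => (g j).getRight?))) ≪≫ₗ ?_
  refine (LinearEquiv.piCongrRight fun h =>
    (LinearEquiv.piCongrRight fun g =>
      Submodule.quotEquivOfEq _ _ (congrArg (Iof a) g.2)) ≪≫ₗ
    (LinearEquiv.piCongrLeft' R (fun _ => R ⧸ Iof a h)
      (Fintype.equivOfCardEq ((card_cfiber h).trans (Fintype.card_fin _).symm)))) ≪≫ₗ ?_
  refine (regroup dk (fun h => Fin (r ^ (n - (Pset h).card)) → R ⧸ Iof a h)) ≪≫ₗ ?_
  refine (LinearEquiv.piOptionEquivProd (R := R)) ≪≫ₗ ?_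
  refine LinearEquiv.prodCongr ?_ ?_
  · -- the `none` component
    refine (LinearEquiv.piCongrRight fun hh =>
      (LinearEquiv.piCongrLeft' R (fun _ => R ⧸ Iof a hh.1)
        (finCongr (by rw [dk_none_card hh.2, Nat.sub_zero]))) ≪≫ₗ
      (LinearEquiv.piCongrRight fun _ =>
        Submodule.quotEquivOfEqBot _ (by rw [dk_none hh.2, Iof_const_none]))) ≪≫ₗ
      (LinearEquiv.funUnique _ R (Fin (r ^ n) → R))
  · -- the `some k` components
    refine LinearEquiv.piCongrRight fun k => ?_
    refine (LinearEquiv.piCongrRight fun hh =>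
      LinearEquiv.piCongrLeft' R (fun _ => R ⧸ Iof a hh.1)
        (finCongr (by rw [dk_card hh.2]))) ≪≫ₗ ?_
    refine (regroup (dv k)
      (fun hh => Fin (r ^ (n - (k.1 + 1))) → R ⧸ Iof a hh.1)) ≪≫ₗ ?_
    refine LinearEquiv.piCongrRight fun v => ?_
    refine (LinearEquiv.piCongrRight fun hh' => LinearEquiv.piCongrRight fun _ =>
      Submodule.quotEquivOfEq _ _ (Iof_eq_span a hh'.1 hh'.2)) ≪≫ₗ ?_
    refine LinearEquiv.piCongrLeft' R
      (fun _ => Fin (r ^ (n - (k.1 + 1))) → R ⧸ Ideal.span (Set.range fun m => a (v m)))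
      (Fintype.equivOfCardEq ((card_dvFiber k v).trans (Fintype.card_fin _).symm)) ≪≫ₗ ?_
    refine (piProdCurry fun _ : Fin (n.choose (k.1 + 1)) × Fin (r ^ (n - (k.1 + 1))) =>
      R ⧸ Ideal.span (Set.range fun m => a (v m))).symm ≪≫ₗ ?_
    exact LinearEquiv.piCongrLeft' R
      (fun _ => R ⧸ Ideal.span (Set.range fun m => a (v m))) finProdFinEquiv

end modules

end TPaux

/-- If `M ≅ R^r ⊕ ⊕_{i=1}^s R/Ra_i` over a commutative unital ring `R`, then
`T^n M ≅ R^{r^n} ⊕ ⊕_{k=1}^n ⊕_{1 ≤ i_1,…,i_k ≤ s} (R/⟨a_{i_1},…,a_{i_k}⟩)^{C(n,k)·r^{n-k}}`,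
the inner sum being over all ordered `k`-tuples.  Here `k : Fin n` encodes the index
`k+1 ∈ {1,…,n}`. -/
theorem tensorPower_decomposition
    (R : Type) [CommRing R] (r s n : ℕ) (a : Fin s → R)
    (M : Type) [AddCommGroup M] [Module R M]
    (hM : Nonempty (M ≃ₗ[R] (Fin r → R) × (Π i : Fin s, R ⧸ Ideal.span {a i}))) :
    Nonempty (TensorPower R n M ≃ₗ[R]
      (Fin (r ^ n) → R) ×
      Π (k : Fin n) (v : Fin (k.val + 1) → Fin s),
        Fin (Nat.choose n (k.val + 1) * r ^ (n - (k.val + 1))) →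
          R ⧸ Ideal.span (Set.range fun j => a (v j))) := by
  obtain ⟨e0⟩ := hM
  exact ⟨TPaux.finalEquiv a r n M e0⟩
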